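/- (Tender measurement lemma, version with classical record.) Let {ρ_a : a ∈ A} be a finite family of density operators on a finite-dimensional complex Hilbert space H, let {D_b : b ∈ B} be a POVM on H indexed by a finite set B, let φ : A → B be any map, and let ε > 0 be such that 1 − Tr(ρ_a D_{φ(a)}) ≤ ε for every a ∈ A. Then the quantum operation Δ : density operators on H → density operators on ℂ^B ⊗ H defined by Δ(ρ) = Σ_{b∈B} |b⟩⟨b| ⊗ √(D_b) ρ √(D_b) satisfies ‖ |φ(a)⟩⟨φ(a)| ⊗ ρ_a − Δ(ρ_a) ‖₁ ≤ √(8ε) + ε for every a ∈ A. -/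

import Mathlib

set_option linter.unusedSectionVars false

open scoped ComplexOrder Kronecker
noncomputable section

/-- The old Mathlib `Matrix.PosSemidef.sqrt` (removed since), with its original definition. -/
def Matrix.PosSemidef.sqrt {n 𝕜 : Type*} [Fintype n] [RCLike 𝕜] [DecidableEq n]
    {A : Matrix n n 𝕜} (hA : A.PosSemidef) : Matrix n n 𝕜 :=
  hA.1.eigenvectorUnitary.1 * Matrix.diagonal ((↑) ∘ (√·) ∘ hA.1.eigenvalues) *
  (star hA.1.eigenvectorUnitary : Matrix n n 𝕜)

def traceNorm {n : Type*} [Fintype n] [DecidableEq n] (A : Matrix n n ℂ) : ℝ :=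
  ((Matrix.posSemidef_conjTranspose_mul_self A).sqrt).trace.re

def IsDensity {n : Type*} [Fintype n] (ρ : Matrix n n ℂ) : Prop :=
  ρ.PosSemidef ∧ ρ.trace = 1

namespace Matrix.PosSemidef
variable {n : Type*} [Fintype n] [DecidableEq n]

lemma posSemidef_sqrt {A : Matrix n n ℂ} (hA : A.PosSemidef) : hA.sqrt.PosSemidef := by
  unfold Matrix.PosSemidef.sqrt
  apply PosSemidef.mul_mul_conjTranspose_same
  refine posSemidef_diagonal_iff.mpr fun i ↦ ?_
  simpa using Complex.zero_le_real.mpr (Real.sqrt_nonneg (hA.1.eigenvalues i))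

lemma sqrt_mul_self {A : Matrix n n ℂ} (hA : A.PosSemidef) : hA.sqrt * hA.sqrt = A := by
  unfold Matrix.PosSemidef.sqrt
  set U := hA.1.eigenvectorUnitary
  have hU : (star U : Matrix n n ℂ) * (U : Matrix n n ℂ) = 1 := Unitary.coe_star_mul_self U
  have : ∀ E : Matrix n n ℂ, (U : Matrix n n ℂ) * E * (star U : Matrix n n ℂ) *
      ((U : Matrix n n ℂ) * E * (star U : Matrix n n ℂ))
      = (U : Matrix n n ℂ) * (E * ((star U : Matrix n n ℂ) * (U : Matrix n n ℂ)) * E) *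
        (star U : Matrix n n ℂ) := fun E => by
    noncomm_ring
  rw [this, hU, mul_one, diagonal_mul_diagonal]
  conv_rhs => rw [hA.1.spectral_theorem, Unitary.conjStarAlgAut_apply]
  congr 3
  funext i
  simp only [Function.comp_apply]
  rw [← RCLike.ofReal_mul, Real.mul_self_sqrt (hA.eigenvalues_nonneg i)]

open scoped MatrixOrder in
lemma eq_sqrt_of_sq_eq {S B : Matrix n n ℂ} (hS : S.PosSemidef) (hB : B.PosSemidef)
    (h : S ^ 2 = B) : S = hB.sqrt := by
  rw [pow_two] at h
  rw [← CFC.sqrt_unique h hS.nonneg, CFC.sqrt_unique hB.sqrt_mul_self hB.posSemidef_sqrt.nonneg]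

end Matrix.PosSemidef

namespace Tender
open Matrix

variable {n : Type*} [Fintype n] [DecidableEq n]

lemma sqrt_congr {B C : Matrix n n ℂ} (hB : B.PosSemidef) (hC : C.PosSemidef) (h : B = C) :
    hB.sqrt = hC.sqrt := by subst h; rfl

lemma sqrt_unique {B : Matrix n n ℂ} (hB : B.PosSemidef) {S : Matrix n n ℂ}
    (hS : S.PosSemidef) (h : S * S = B) : hB.sqrt = S :=
  (hS.eq_sqrt_of_sq_eq hB (by rw [pow_two, h])).symm

/-- conjugation of a real diagonal by the eigenvector unitary of a Hermitian matrix -/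
def conjU {A : Matrix n n ℂ} (hA : A.IsHermitian) (f : n → ℝ) : Matrix n n ℂ :=
  (hA.eigenvectorUnitary : Matrix n n ℂ) * diagonal ((↑) ∘ f) *
    (hA.eigenvectorUnitary : Matrix n n ℂ)ᴴ

variable {A : Matrix n n ℂ} (hA : A.IsHermitian)

lemma U_mul_Uh :
    (hA.eigenvectorUnitary : Matrix n n ℂ) * (hA.eigenvectorUnitary : Matrix n n ℂ)ᴴ = 1 := by
  rw [← star_eq_conjTranspose]
  exact mem_unitaryGroup_iff.mp hA.eigenvectorUnitary.2

lemma Uh_mul_U :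
    (hA.eigenvectorUnitary : Matrix n n ℂ)ᴴ * (hA.eigenvectorUnitary : Matrix n n ℂ) = 1 := by
  rw [← star_eq_conjTranspose]
  exact mem_unitaryGroup_iff'.mp hA.eigenvectorUnitary.2

lemma conjU_mul (f g : n → ℝ) : conjU hA f * conjU hA g = conjU hA (f * g) := by
  unfold conjU
  set U := (hA.eigenvectorUnitary : Matrix n n ℂ)
  have : U * diagonal ((↑) ∘ f) * Uᴴ * (U * diagonal ((↑) ∘ g) * Uᴴ)
      = U * (diagonal ((↑) ∘ f) * (Uᴴ * U) * diagonal ((↑) ∘ g)) * Uᴴ := by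
    noncomm_ring
  rw [this, Uh_mul_U hA, mul_one, diagonal_mul_diagonal]
  have h2 : (fun i => (Complex.ofReal ∘ f) i * (Complex.ofReal ∘ g) i)
      = ((↑) ∘ (f * g) : n → ℂ) := by funext i; simp
  rw [h2]

lemma conjU_one : conjU hA 1 = 1 := by
  unfold conjU
  have : ((↑) ∘ (1 : n → ℝ)) = (fun _ : n => (1 : ℂ)) := by funext i; simp
  rw [this, diagonal_one, mul_one, U_mul_Uh hA]

lemma conjU_add (f g : n → ℝ) : conjU hA f + conjU hA g = conjU hA (f + g) := by
  unfold conjU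
  rw [← add_mul, ← mul_add, diagonal_add]
  have h2 : (fun i => (Complex.ofReal ∘ f) i + (Complex.ofReal ∘ g) i)
      = ((↑) ∘ (f + g) : n → ℂ) := by funext i; simp
  rw [h2]

lemma conjU_sub (f g : n → ℝ) : conjU hA f - conjU hA g = conjU hA (f - g) := by
  unfold conjU
  rw [← sub_mul, ← mul_sub, diagonal_sub]
  have h2 : (fun i => (Complex.ofReal ∘ f) i - (Complex.ofReal ∘ g) i)
      = ((↑) ∘ (f - g) : n → ℂ) := by funext i; simp
  rw [h2]

lemma conjU_eigen : conjU hA hA.eigenvalues = A := (hA.spectral_theorem).symm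

lemma conjU_posSemidef {f : n → ℝ} (hf : ∀ i, 0 ≤ f i) : (conjU hA f).PosSemidef := by
  unfold conjU
  rw [← star_eq_conjTranspose]
  apply PosSemidef.mul_mul_conjTranspose_same
  refine posSemidef_diagonal_iff.mpr fun i ↦ ?_
  simpa using Complex.zero_le_real.mpr (hf i)

lemma conjU_trace_re (f : n → ℝ) : (conjU hA f).trace.re = ∑ i, f i := by
  unfold conjU
  rw [trace_mul_cycle, Uh_mul_U hA, one_mul, trace_diagonal]
  simp [Complex.re_sum]

lemma conjU_conj (f : n → ℝ) :
    (hA.eigenvectorUnitary : Matrix n n ℂ)ᴴ * conjU hA f *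
      (hA.eigenvectorUnitary : Matrix n n ℂ) = diagonal ((↑) ∘ f) := by
  unfold conjU
  set U := (hA.eigenvectorUnitary : Matrix n n ℂ)
  have : Uᴴ * (U * diagonal ((↑) ∘ f) * Uᴴ) * U
      = (Uᴴ * U) * diagonal ((↑) ∘ f) * (Uᴴ * U) := by noncomm_ring
  rw [this, Uh_mul_U hA, one_mul, mul_one]

lemma sqrt_eq_conjU (hP : A.PosSemidef) :
    hP.sqrt = conjU hP.1 (Real.sqrt ∘ hP.1.eigenvalues) := by
  unfold conjU
  rw [← star_eq_conjTranspose]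
  rfl


lemma conjU_isHermitian (f : n → ℝ) : (conjU hA f).IsHermitian := by
  unfold conjU
  set U := (hA.eigenvectorUnitary : Matrix n n ℂ)
  show (U * diagonal ((↑) ∘ f) * Uᴴ)ᴴ = _
  rw [conjTranspose_mul, conjTranspose_mul, conjTranspose_conjTranspose,
    diagonal_conjTranspose, ← mul_assoc]
  have : star ((↑) ∘ f : n → ℂ) = ((↑) ∘ f : n → ℂ) := by
    funext i
    simp only [Pi.star_apply, Function.comp_apply, RCLike.star_def, Complex.conj_ofReal]
  rw [this]

/-- eigenvalues are at most 1 when `1 - A` is PSD -/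
lemma eigenvalues_le_one (h1 : (1 - A).PosSemidef) (i : n) : hA.eigenvalues i ≤ 1 := by
  have hd : (1 : Matrix n n ℂ) - A = conjU hA (1 - hA.eigenvalues) := by
    rw [← conjU_sub, conjU_one, conjU_eigen]
  have hpsd : ((hA.eigenvectorUnitary : Matrix n n ℂ)ᴴ * ((1 : Matrix n n ℂ) - A) *
      (hA.eigenvectorUnitary : Matrix n n ℂ)).PosSemidef := by
    rw [← star_eq_conjTranspose]
    exact h1.conjTranspose_mul_mul_same _
  rw [hd, conjU_conj] at hpsd
  have := posSemidef_diagonal_iff.mp hpsd i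
  exact Complex.real_le_real.mp (by simpa using this)

lemma traceNorm_eq_sum_abs : traceNorm A = ∑ i, |hA.eigenvalues i| := by
  unfold traceNorm
  rw [sqrt_unique _ (conjU_posSemidef hA (f := fun i => |hA.eigenvalues i|)
      (fun i => abs_nonneg _))
    (by
      rw [conjU_mul]
      have : (fun i => |hA.eigenvalues i|) * (fun i => |hA.eigenvalues i|)
          = hA.eigenvalues * hA.eigenvalues := by
        funext i; simp [Pi.mul_apply, abs_mul_abs_self]
      rw [this, ← conjU_mul, conjU_eigen, hA.eq])]
  exact conjU_trace_re hA _

lemma traceNorm_of_posSemidef {P : Matrix n n ℂ} (hP : P.PosSemidef) :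
    traceNorm P = P.trace.re := by
  unfold traceNorm
  rw [sqrt_unique _ hP (by rw [hP.1.eq])]

lemma traceNorm_neg (M : Matrix n n ℂ) : traceNorm (-M) = traceNorm M := by
  unfold traceNorm
  rw [sqrt_congr _ (posSemidef_conjTranspose_mul_self M) (by simp)]

include hA in
/-- existence of the "sign" contraction achieving the trace norm -/
lemma exists_sign : ∃ X : Matrix n n ℂ, X.IsHermitian ∧ X * X = 1 ∧
    (X * A).trace.re = traceNorm A := by
  refine ⟨conjU hA (fun i => if 0 ≤ hA.eigenvalues i then 1 else -1),
    conjU_isHermitian hA _, ?_, ?_⟩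
  · rw [conjU_mul]
    have : (fun i => if 0 ≤ hA.eigenvalues i then (1:ℝ) else -1) *
        (fun i => if 0 ≤ hA.eigenvalues i then (1:ℝ) else -1) = 1 := by
      funext i; by_cases h : 0 ≤ hA.eigenvalues i <;> simp [h]
    rw [this, conjU_one]
  · have hmul := conjU_mul hA (fun i => if 0 ≤ hA.eigenvalues i then (1:ℝ) else -1)
      hA.eigenvalues
    rw [conjU_eigen hA] at hmul
    rw [hmul, traceNorm_eq_sum_abs hA, conjU_trace_re]
    refine Finset.sum_congr rfl fun i _ => ?_
    by_cases h : 0 ≤ hA.eigenvalues i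
    · simp [h, abs_of_nonneg h]
    · simp [h, abs_of_neg (lt_of_not_ge h)]


lemma trace_conjTranspose_mul_self_re (C : Matrix n n ℂ) :
    (Cᴴ * C).trace.re = ∑ j, ∑ i, Complex.normSq (C i j) := by
  rw [trace, Complex.re_sum]
  refine Finset.sum_congr rfl fun j _ => ?_
  rw [diag_apply, mul_apply, Complex.re_sum]
  refine Finset.sum_congr rfl fun i _ => ?_
  rw [conjTranspose_apply]
  simp [Complex.normSq_apply, Complex.mul_re]

lemma trace_re_nonneg_of_posSemidef {P : Matrix n n ℂ} (hP : P.PosSemidef) :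
    0 ≤ P.trace.re := by
  have h : P = hP.sqrtᴴ * hP.sqrt := by rw [hP.posSemidef_sqrt.1.eq, hP.sqrt_mul_self]
  rw [h, trace_conjTranspose_mul_self_re]
  exact Finset.sum_nonneg fun j _ => Finset.sum_nonneg fun i _ => Complex.normSq_nonneg _

/-- Cauchy–Schwarz for the Frobenius inner product. -/
lemma re_trace_conj_mul_le (C D : Matrix n n ℂ) :
    (Cᴴ * D).trace.re ≤ Real.sqrt ((Cᴴ * C).trace.re) * Real.sqrt ((Dᴴ * D).trace.re) := by
  have h1 : (Cᴴ * D).trace.re = ∑ j, ∑ i, (star (C i j) * D i j).re := by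
    rw [trace, Complex.re_sum]
    refine Finset.sum_congr rfl fun j _ => ?_
    rw [diag_apply, mul_apply, Complex.re_sum]
    exact Finset.sum_congr rfl fun i _ => by rw [conjTranspose_apply]
  have h2 : ∀ j i, (star (C i j) * D i j).re ≤ ‖C i j‖ * ‖D i j‖ := by
    intro j i
    calc (star (C i j) * D i j).re ≤ ‖star (C i j) * D i j‖ :=
          Complex.re_le_norm _
      _ = ‖C i j‖ * ‖D i j‖ := by
          rw [norm_mul]
          simp [RCLike.star_def]
  have h3 : (Cᴴ * D).trace.re ≤ ∑ j, ∑ i, ‖C i j‖ * ‖D i j‖ := by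
    rw [h1]
    exact Finset.sum_le_sum fun j _ => Finset.sum_le_sum fun i _ => h2 j i
  refine h3.trans ?_
  have key : (∑ j, ∑ i, ‖C i j‖ * ‖D i j‖) ^ 2
      ≤ (∑ j, ∑ i, ‖C i j‖ ^ 2) * (∑ j, ∑ i, ‖D i j‖ ^ 2) := by
    have hprod := Finset.sum_mul_sq_le_sq_mul_sq Finset.univ
      (fun p : n × n => ‖C p.2 p.1‖) (fun p : n × n => ‖D p.2 p.1‖)
    have e1 : ∑ p : n × n, ‖C p.2 p.1‖ * ‖D p.2 p.1‖
        = ∑ j, ∑ i, ‖C i j‖ * ‖D i j‖ := by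
      rw [← Finset.univ_product_univ, Finset.sum_product]
    have e2 : ∑ p : n × n, ‖C p.2 p.1‖ ^ 2
        = ∑ j, ∑ i, ‖C i j‖ ^ 2 := by
      rw [← Finset.univ_product_univ, Finset.sum_product]
    have e3 : ∑ p : n × n, ‖D p.2 p.1‖ ^ 2
        = ∑ j, ∑ i, ‖D i j‖ ^ 2 := by
      rw [← Finset.univ_product_univ, Finset.sum_product]
    rw [e1, e2, e3] at hprod
    exact hprod
  have hC : (∑ j, ∑ i, ‖C i j‖ ^ 2) = (Cᴴ * C).trace.re := by
    rw [trace_conjTranspose_mul_self_re]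
    exact Finset.sum_congr rfl fun j _ => Finset.sum_congr rfl fun i _ => by
      rw [Complex.sq_norm]
  have hD : (∑ j, ∑ i, ‖D i j‖ ^ 2) = (Dᴴ * D).trace.re := by
    rw [trace_conjTranspose_mul_self_re]
    exact Finset.sum_congr rfl fun j _ => Finset.sum_congr rfl fun i _ => by
      rw [Complex.sq_norm]
  rw [hC, hD] at key
  have hnn : (0:ℝ) ≤ ∑ j, ∑ i, ‖C i j‖ * ‖D i j‖ := by positivity
  calc (∑ j, ∑ i, ‖C i j‖ * ‖D i j‖)
      = Real.sqrt ((∑ j, ∑ i, ‖C i j‖ * ‖D i j‖) ^ 2) := by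
        rw [Real.sqrt_sq hnn]
    _ ≤ Real.sqrt ((Cᴴ * C).trace.re * (Dᴴ * D).trace.re) := Real.sqrt_le_sqrt key
    _ = _ := Real.sqrt_mul (trace_re_nonneg_of_posSemidef
          (posSemidef_conjTranspose_mul_self C)) _

include hA in
/-- contraction bound: `Re Tr (X * A) ≤ ‖A‖₁` for a Hermitian involution-like `X`. -/
lemma re_trace_mul_le {X : Matrix n n ℂ} (hX : X.IsHermitian) (hXX : X * X = 1) :
    (X * A).trace.re ≤ traceNorm A := by
  set U := (hA.eigenvectorUnitary : Matrix n n ℂ) with hU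
  set Y := Uᴴ * X * U with hYdef
  have hYY : Y * Y = 1 := by
    have : Uᴴ * X * U * (Uᴴ * X * U) = Uᴴ * (X * (U * Uᴴ) * X) * U := by noncomm_ring
    rw [hYdef, this, U_mul_Uh hA, mul_one, hXX, mul_one, Uh_mul_U hA]
  have hYh : Yᴴ = Y := by
    rw [hYdef, conjTranspose_mul, conjTranspose_mul, conjTranspose_conjTranspose, hX.eq,
      mul_assoc]
  have hdiag : ∀ i, |(Y i i).re| ≤ 1 := by
    intro i
    have hsum : ∑ j, Complex.normSq (Y i j) = 1 := by
      have h11 : (Y * Y) i i = 1 := by rw [hYY]; simp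
      have : (Y * Y) i i = ∑ j, (Complex.normSq (Y i j) : ℂ) := by
        rw [mul_apply]
        refine Finset.sum_congr rfl fun j _ => ?_
        have hYji : Y j i = star (Y i j) := by
          conv_lhs => rw [← hYh]
          rw [conjTranspose_apply]
        rw [hYji, RCLike.star_def, Complex.mul_conj]
      rw [this] at h11
      exact_mod_cast h11
    have h1 : Complex.normSq (Y i i) ≤ 1 := by
      rw [← hsum]
      exact Finset.single_le_sum (fun j _ => Complex.normSq_nonneg _) (Finset.mem_univ i)
    have h2 : (Y i i).re ^ 2 ≤ 1 := by
      have := Complex.normSq_apply (Y i i)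
      nlinarith [sq_nonneg (Y i i).im]
    rw [abs_le]
    constructor <;> nlinarith [h2]
  have htr : (X * A).trace = ∑ i, Y i i * (hA.eigenvalues i : ℂ) := by
    conv_lhs => rw [hA.spectral_theorem, Unitary.conjStarAlgAut_apply, ← hU]
    have hre : X * (U * diagonal (RCLike.ofReal ∘ hA.eigenvalues) * star U)
        = U * (Y * diagonal (RCLike.ofReal ∘ hA.eigenvalues)) * Uᴴ := by
      rw [star_eq_conjTranspose, hYdef]
      have h1 : U * (Uᴴ * X * U * diagonal (RCLike.ofReal ∘ hA.eigenvalues)) * Uᴴ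
          = (U * Uᴴ) * X * (U * diagonal (RCLike.ofReal ∘ hA.eigenvalues) * Uᴴ) := by
        noncomm_ring
      rw [show U * (Y * diagonal (RCLike.ofReal ∘ hA.eigenvalues)) * Uᴴ
          = U * (Uᴴ * X * U * diagonal (RCLike.ofReal ∘ hA.eigenvalues)) * Uᴴ from by
        rw [hYdef], h1, U_mul_Uh hA, one_mul]
    rw [hre, trace_mul_cycle, ← mul_assoc, Uh_mul_U hA, one_mul, trace]
    refine Finset.sum_congr rfl fun i _ => ?_
    rw [diag_apply, mul_diagonal]
    rfl
  rw [traceNorm_eq_sum_abs hA, htr, Complex.re_sum]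
  refine Finset.sum_le_sum fun i _ => ?_
  have : (Y i i * (hA.eigenvalues i : ℂ)).re = (Y i i).re * hA.eigenvalues i := by
    simp [Complex.mul_re]
  rw [this]
  calc (Y i i).re * hA.eigenvalues i ≤ |(Y i i).re * hA.eigenvalues i| := le_abs_self _
    _ = |(Y i i).re| * |hA.eigenvalues i| := abs_mul _ _
    _ ≤ 1 * |hA.eigenvalues i| := by
        have := hdiag i
        nlinarith [abs_nonneg (hA.eigenvalues i)]
    _ = _ := one_mul _

lemma traceNorm_add_le {M N : Matrix n n ℂ} (hM : M.IsHermitian) (hN : N.IsHermitian) :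
    traceNorm (M + N) ≤ traceNorm M + traceNorm N := by
  obtain ⟨X, hX, hXX, hXtr⟩ := exists_sign (hM.add hN)
  rw [← hXtr, mul_add, trace_add, Complex.add_re]
  exact add_le_add (re_trace_mul_le hM hX hXX) (re_trace_mul_le hN hX hXX)

lemma trace_mul_psd_nonneg {P N : Matrix n n ℂ} (hP : P.PosSemidef) (hN : N.PosSemidef) :
    0 ≤ (P * N).trace.re := by
  set s := hP.sqrt with hs
  have h : sᴴ * N * s = s * N * s := by rw [hP.posSemidef_sqrt.1.eq]
  have h2 : (s * N * s).trace = (P * N).trace := by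
    rw [trace_mul_cycle, hP.sqrt_mul_self]
  calc (0:ℝ) ≤ (sᴴ * N * s).trace.re :=
        trace_re_nonneg_of_posSemidef (hN.conjTranspose_mul_mul_same s)
    _ = (P * N).trace.re := by rw [h, h2]

lemma trace_mul_psd_mono {P N N' : Matrix n n ℂ} (hP : P.PosSemidef)
    (h : (N' - N).PosSemidef) : (P * N).trace.re ≤ (P * N').trace.re := by
  have := trace_mul_psd_nonneg hP h
  rw [mul_sub, trace_sub, Complex.sub_re] at this
  linarith


/-- Gentle measurement lemma. -/
lemma gentle {ρ P : Matrix n n ℂ} (hρ : ρ.PosSemidef) (hρ1 : ρ.trace = 1)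
    (hP : P.PosSemidef) (hP1 : ((1 : Matrix n n ℂ) - P).PosSemidef) {ε : ℝ}
    (hh : 1 - (ρ * P).trace.re ≤ ε) :
    traceNorm (ρ - hP.sqrt * ρ * hP.sqrt) ≤ 2 * Real.sqrt ε := by
  set Λ := hP.sqrt with hΛdef
  set s := hρ.sqrt with hsdef
  have hΛh : Λᴴ = Λ := hP.posSemidef_sqrt.1
  have hsh : sᴴ = s := hρ.posSemidef_sqrt.1
  have hss : s * s = ρ := hρ.sqrt_mul_self
  have hΛΛ : Λ * Λ = P := hP.sqrt_mul_self
  have h1Λ : ((1 : Matrix n n ℂ) - Λ)ᴴ = 1 - Λ := by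
    rw [conjTranspose_sub, conjTranspose_one, hΛh]
  have hρre : ρ.trace.re = 1 := by rw [hρ1]; simp
  have hM : (ρ - Λ * ρ * Λ).IsHermitian := by
    have h1 : (Λ * ρ * Λ).PosSemidef := by
      have := hρ.conjTranspose_mul_mul_same Λ
      rwa [hΛh] at this
    exact hρ.1.sub h1.1
  obtain ⟨X, hX, hXX, hXtr⟩ := exists_sign hM
  rw [← hXtr]
  have hdec : X * (ρ - Λ * ρ * Λ) = X * ((1 - Λ) * ρ) + X * (Λ * ρ * (1 - Λ)) := by
    noncomm_ring
  rw [hdec, trace_add, Complex.add_re]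
  -- the eigenvalue comparison Λ ≥ P
  have hΛP : (Λ - P).PosSemidef := by
    have h1 : Λ = conjU hP.1 (Real.sqrt ∘ hP.1.eigenvalues) := sqrt_eq_conjU hP
    have hrw := conjU_sub hP.1 (Real.sqrt ∘ hP.1.eigenvalues) hP.1.eigenvalues
    rw [conjU_eigen hP.1, ← h1] at hrw
    rw [hrw]
    refine conjU_posSemidef hP.1 fun i => ?_
    rw [Pi.sub_apply, Function.comp_apply]
    show (0:ℝ) ≤ Real.sqrt (hP.1.eigenvalues i) - hP.1.eigenvalues i
    have hnn : 0 ≤ hP.1.eigenvalues i := hP.eigenvalues_nonneg i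
    have hle : hP.1.eigenvalues i ≤ 1 := eigenvalues_le_one hP.1 hP1 i
    have h1 : Real.sqrt (hP.1.eigenvalues i) ≤ 1 := by
      rw [show (1:ℝ) = Real.sqrt 1 from (Real.sqrt_one).symm]
      exact Real.sqrt_le_sqrt hle
    have h2 : Real.sqrt (hP.1.eigenvalues i) * Real.sqrt (hP.1.eigenvalues i)
        = hP.1.eigenvalues i := Real.mul_self_sqrt hnn
    nlinarith [Real.sqrt_nonneg (hP.1.eigenvalues i)]
  have hPle : (ρ * P).trace.re ≤ (ρ * Λ).trace.re := trace_mul_psd_mono hρ hΛP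
  -- Tr(ρ(1-Λ)²) ≤ ε
  have hkey : (ρ * ((1 - Λ) * (1 - Λ))).trace.re ≤ ε := by
    have hexp : ((1:Matrix n n ℂ) - Λ) * (1 - Λ) = 1 - Λ - Λ + P := by
      rw [← hΛΛ]; noncomm_ring
    rw [hexp]
    have : ρ * ((1:Matrix n n ℂ) - Λ - Λ + P) = ρ - ρ * Λ - ρ * Λ + ρ * P := by
      noncomm_ring
    rw [this, trace_add, trace_sub, trace_sub, Complex.add_re, Complex.sub_re,
      Complex.sub_re, hρre]
    linarith
  -- Tr(ρ P) ≤ 1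
  have hρP1 : (ρ * P).trace.re ≤ 1 := by
    have h0 := trace_mul_psd_nonneg hρ hP1
    rw [mul_sub, mul_one, trace_sub, Complex.sub_re, hρre] at h0
    linarith
  -- the common factor bound
  have hfac : (((1 - Λ) * s)ᴴ * ((1 - Λ) * s)).trace.re ≤ ε := by
    have e : ((1 - Λ) * s)ᴴ * ((1 - Λ) * s) = s * ((1 - Λ) * (1 - Λ)) * s := by
      rw [conjTranspose_mul, hsh, h1Λ]
      noncomm_ring
    rw [e, trace_mul_cycle, hss]
    exact hkey
  -- term 1
  have ht1 : (X * ((1 - Λ) * ρ)).trace.re ≤ Real.sqrt ε := by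
    have eL : X * ((1 - Λ) * ρ) = (X * ((1 - Λ) * s)) * s := by
      rw [← hss]; noncomm_ring
    have eR : (X * s)ᴴ * ((1 - Λ) * s) = s * (X * ((1 - Λ) * s)) := by
      rw [conjTranspose_mul, hsh, hX.eq]
      noncomm_ring
    have e : (X * ((1 - Λ) * ρ)).trace = ((X * s)ᴴ * ((1 - Λ) * s)).trace := by
      rw [eL, trace_mul_comm, eR]
    rw [e]
    refine (re_trace_conj_mul_le _ _).trans ?_
    have b1 : ((X * s)ᴴ * (X * s)).trace.re = 1 := by
      have e2 : (X * s)ᴴ * (X * s) = ρ := by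
        rw [conjTranspose_mul, hsh, hX.eq]
        have : s * X * (X * s) = s * (X * X) * s := by noncomm_ring
        rw [this, hXX, mul_one, hss]
      rw [e2, hρre]
    rw [b1, Real.sqrt_one, one_mul]
    exact Real.sqrt_le_sqrt hfac
  -- term 2
  have ht2 : (X * (Λ * ρ * (1 - Λ))).trace.re ≤ Real.sqrt ε := by
    have eL : X * (Λ * ρ * (1 - Λ)) = (X * (Λ * s)) * (s * (1 - Λ)) := by
      rw [← hss]; noncomm_ring
    have eR : ((1 - Λ) * s)ᴴ * (X * (Λ * s)) = (s * (1 - Λ)) * (X * (Λ * s)) := by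
      rw [conjTranspose_mul, hsh, h1Λ]
    have e : (X * (Λ * ρ * (1 - Λ))).trace = (((1 - Λ) * s)ᴴ * (X * (Λ * s))).trace := by
      rw [eL, trace_mul_comm, eR]
    rw [e]
    refine (re_trace_conj_mul_le _ _).trans ?_
    have b2 : ((X * (Λ * s))ᴴ * (X * (Λ * s))).trace.re ≤ 1 := by
      have e2 : (X * (Λ * s))ᴴ * (X * (Λ * s)) = s * P * s := by
        rw [conjTranspose_mul, conjTranspose_mul, hsh, hΛh, hX.eq]
        have : s * Λ * X * (X * (Λ * s)) = s * (Λ * (X * X) * Λ) * s := by noncomm_ring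
        rw [this, hXX, mul_one, hΛΛ]
      have e3 : (s * P * s).trace = (ρ * P).trace := by
        rw [trace_mul_cycle, hss]
      rw [e2, e3]
      exact hρP1
    calc Real.sqrt ((((1 - Λ) * s)ᴴ * ((1 - Λ) * s)).trace.re) *
          Real.sqrt (((X * (Λ * s))ᴴ * (X * (Λ * s))).trace.re)
        ≤ Real.sqrt ε * Real.sqrt 1 :=
          mul_le_mul (Real.sqrt_le_sqrt hfac) (Real.sqrt_le_sqrt b2)
            (Real.sqrt_nonneg _) (Real.sqrt_nonneg _)
      _ = Real.sqrt ε := by rw [Real.sqrt_one, mul_one]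
  linarith


section Kron
variable {m : Type*} [Fintype m] [DecidableEq m]

lemma kron_conjTranspose (E : Matrix m m ℂ) (M : Matrix n n ℂ) :
    (E ⊗ₖ M)ᴴ = Eᴴ ⊗ₖ Mᴴ := by
  ext ⟨i, j⟩ ⟨k, l⟩
  simp [conjTranspose_apply, kroneckerMap_apply, star_mul']

lemma E_conjTranspose (b : m) :
    (single b b (1:ℂ))ᴴ = single b b (1:ℂ) := by
  ext i j
  simp only [conjTranspose_apply, single, of_apply]
  by_cases h : b = j ∧ b = i <;> by_cases h' : b = i ∧ b = j <;>
    simp_all [and_comm]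

lemma kron_E_posSemidef (b : m) {M : Matrix n n ℂ} (hM : M.PosSemidef) :
    ((single b b (1:ℂ)) ⊗ₖ M).PosSemidef := by
  set E := single b b (1:ℂ) with hE
  have hEh : Eᴴ = E := E_conjTranspose b
  have hEE : E * E = E := by
    rw [hE, single_mul_single_same, one_mul]
  have key : E ⊗ₖ M = (E ⊗ₖ hM.sqrt)ᴴ * (E ⊗ₖ hM.sqrt) := by
    rw [kron_conjTranspose, hEh, hM.posSemidef_sqrt.1.eq, ← mul_kronecker_mul, hEE,
      hM.sqrt_mul_self]
  rw [key]
  exact posSemidef_conjTranspose_mul_self _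

lemma traceNorm_kron_E (b : m) (M : Matrix n n ℂ) :
    traceNorm ((single b b (1:ℂ)) ⊗ₖ M) = traceNorm M := by
  set E := single b b (1:ℂ) with hE
  have hEh : Eᴴ = E := E_conjTranspose b
  have hEE : E * E = E := by
    rw [hE, single_mul_single_same, one_mul]
  set S := (posSemidef_conjTranspose_mul_self M).sqrt with hS
  have hSps : S.PosSemidef := (posSemidef_conjTranspose_mul_self M).posSemidef_sqrt
  have h1 : (E ⊗ₖ M)ᴴ * (E ⊗ₖ M) = E ⊗ₖ (Mᴴ * M) := by
    rw [kron_conjTranspose, hEh, ← mul_kronecker_mul, hEE]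
  have h2 : (E ⊗ₖ S) * (E ⊗ₖ S) = (E ⊗ₖ M)ᴴ * (E ⊗ₖ M) := by
    rw [h1, ← mul_kronecker_mul, hEE,
      (posSemidef_conjTranspose_mul_self M).sqrt_mul_self]
  unfold traceNorm
  rw [sqrt_unique _ (kron_E_posSemidef b hSps) h2, trace_kronecker]
  have : E.trace = 1 := by rw [hE, trace_single_eq_same]
  rw [this, one_mul]

end Kron
end Tender

open Matrix Tender in
theorem tender_measurement_with_record {d : ℕ} {A B : Type*} [Fintype A] [Fintype B]
    [DecidableEq B]
    (ρ : A → Matrix (Fin d) (Fin d) ℂ) (hρ : ∀ a, IsDensity (ρ a))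
    (D : B → Matrix (Fin d) (Fin d) ℂ) (hD : ∀ b, (D b).PosSemidef)
    (hD1 : ∑ b, D b = 1) (φ : A → B) (ε : ℝ) (hε : 0 < ε)
    (h : ∀ a, 1 - (((ρ a) * D (φ a)).trace).re ≤ ε) :
    ∀ a, traceNorm (Matrix.single (φ a) (φ a) (1:ℂ) ⊗ₖ ρ a -
        ∑ b, Matrix.single b b (1:ℂ) ⊗ₖ ((hD b).sqrt * ρ a * (hD b).sqrt))
      ≤ Real.sqrt (8 * ε) + ε := by
  intro a
  set b0 := φ a with hb0
  set ρa := ρ a with hρa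
  set R : Matrix (B × Fin d) (B × Fin d) ℂ :=
    ∑ b ∈ Finset.univ.erase b0,
      Matrix.single b b (1:ℂ) ⊗ₖ ((hD b).sqrt * ρa * (hD b).sqrt) with hR
  set M : Matrix (Fin d) (Fin d) ℂ := ρa - (hD b0).sqrt * ρa * (hD b0).sqrt with hM
  -- PSD of each conjugated term
  have hΛρΛ : ∀ b, ((hD b).sqrt * ρa * (hD b).sqrt).PosSemidef := by
    intro b
    have := (hρ a).1.conjTranspose_mul_mul_same (hD b).sqrt
    rwa [(hD b).posSemidef_sqrt.1.eq] at this
  have hRpsd : R.PosSemidef := by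
    rw [hR]
    refine Finset.sum_induction _ _ (fun x y hx hy => hx.add hy) Matrix.PosSemidef.zero
      fun b _ => kron_E_posSemidef b (hΛρΛ b)
  have hMherm : M.IsHermitian := (hρ a).1.1.sub (hΛρΛ b0).1
  -- 1 - D b0 is PSD
  have h1mD : ((1 : Matrix (Fin d) (Fin d) ℂ) - D b0).PosSemidef := by
    have hsplit : (1 : Matrix (Fin d) (Fin d) ℂ) - D b0 = ∑ b ∈ Finset.univ.erase b0, D b := by
      rw [← hD1, ← Finset.add_sum_erase _ D (Finset.mem_univ b0)]
      abel
    rw [hsplit]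
    exact Finset.sum_induction _ _ (fun x y hx hy => hx.add hy) Matrix.PosSemidef.zero
      fun b _ => hD b
  -- split the matrix
  have hsplit : Matrix.single b0 b0 (1:ℂ) ⊗ₖ ρa -
      ∑ b, Matrix.single b b (1:ℂ) ⊗ₖ ((hD b).sqrt * ρa * (hD b).sqrt)
      = Matrix.single b0 b0 (1:ℂ) ⊗ₖ M + (-R) := by
    rw [← Finset.add_sum_erase _ _ (Finset.mem_univ b0), ← hR]
    have hk : Matrix.single b0 b0 (1:ℂ) ⊗ₖ M
        = Matrix.single b0 b0 (1:ℂ) ⊗ₖ ρa -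
          Matrix.single b0 b0 (1:ℂ) ⊗ₖ ((hD b0).sqrt * ρa * (hD b0).sqrt) := by
      rw [hM]
      ext ⟨i, j⟩ ⟨k, l⟩
      simp [Matrix.kroneckerMap_apply, mul_sub]
    rw [hk]
    abel
  rw [hsplit]
  -- triangle inequality
  have hEMherm : (Matrix.single b0 b0 (1:ℂ) ⊗ₖ M).IsHermitian := by
    show _ = _
    rw [kron_conjTranspose, E_conjTranspose, hMherm.eq]
  have htri := traceNorm_add_le hEMherm hRpsd.1.neg
  refine htri.trans ?_
  -- the tail term
  have hRtr : traceNorm (-R) ≤ ε := by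
    rw [traceNorm_neg, traceNorm_of_posSemidef hRpsd, hR, trace_sum]
    have heach : ∀ b ∈ Finset.univ.erase b0,
        (Matrix.single b b (1:ℂ) ⊗ₖ ((hD b).sqrt * ρa * (hD b).sqrt)).trace
        = (ρa * D b).trace := by
      intro b _
      rw [trace_kronecker, trace_single_eq_same, one_mul, trace_mul_cycle,
        (hD b).sqrt_mul_self, trace_mul_comm]
    rw [Finset.sum_congr rfl heach, ← trace_sum, ← Finset.mul_sum]
    have hsum2 : ∑ b ∈ Finset.univ.erase b0, D b = 1 - D b0 := by
      rw [← hD1, ← Finset.add_sum_erase _ D (Finset.mem_univ b0)]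
      abel
    rw [hsum2, mul_sub, mul_one, trace_sub, Complex.sub_re]
    have := h a
    have hρatr : ρa.trace.re = 1 := by rw [(hρ a).2]; simp
    rw [hρatr]
    exact this
  -- the gentle term
  have hMle : traceNorm (Matrix.single b0 b0 (1:ℂ) ⊗ₖ M) ≤ Real.sqrt (8 * ε) := by
    rw [traceNorm_kron_E]
    have hg := gentle (hρ a).1 (hρ a).2 (hD b0) h1mD (h a)
    rw [← hM] at hg
    refine hg.trans ?_
    have h4 : (2:ℝ) * Real.sqrt ε = Real.sqrt (4 * ε) := by
      rw [Real.sqrt_mul (by norm_num : (0:ℝ) ≤ 4) ε,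
        show (4:ℝ) = 2 ^ 2 by norm_num, Real.sqrt_sq (by norm_num : (0:ℝ) ≤ 2)]
    rw [h4]
    exact Real.sqrt_le_sqrt (by linarith)
  linarith
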